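/- If u ∈ Ḣ¹(ℝ^N) satisfies ‖∇u‖² < ‖∇W‖² and E(u) ≤ (1−δ₀)E(W) for some δ₀ ∈ (0,1), then there are constants c₁(δ₀), c₂ > 0 with c₁(δ₀)∫|∇u|² ≤ E(u) ≤ c₂∫|∇u|²; in particular E(u) ≥ 0 and E(u) is comparable to ∫|∇u|². -/

import Mathlib

open MeasureTheory

theorem aux_PLeT (N : ℕ) (hN : 3 ≤ N) (C : ℝ) (hC : 0 < C) (T P : ℝ) (hT : 0 ≤ T) (hP : 0 ≤ P)
    (hSob : P ^ (((N : ℝ) - 2) / (2 * (N : ℝ))) ≤ C * T ^ ((1 : ℝ) / 2))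
    (hT' : T < C ^ (-(N : ℝ))) : P ≤ T := by
  have hN3 : (3 : ℝ) ≤ (N : ℝ) := by exact_mod_cast hN
  have h2 : (0 : ℝ) < (N : ℝ) - 2 := by linarith
  have hNpos : (0 : ℝ) < (N : ℝ) := by linarith
  set θ : ℝ := ((N : ℝ) - 2) / (2 * (N : ℝ)) with hθdef
  set r : ℝ := (2 * (N : ℝ)) / ((N : ℝ) - 2) with hrdef
  have hθ : 0 < θ := div_pos h2 (by linarith)
  have hr : 0 < r := div_pos (by linarith) h2
  have hθr : θ * r = 1 := by
    rw [hθdef, hrdef]; field_simp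
  rcases eq_or_lt_of_le hT with h0 | hTpos
  · -- T = 0
    have hT0 : T = 0 := h0.symm
    have hP0 : P = 0 := by
      by_contra hne
      have hPpos : 0 < P := lt_of_le_of_ne hP (Ne.symm hne)
      have : (0 : ℝ) < P ^ θ := Real.rpow_pos_of_pos hPpos θ
      rw [hT0, Real.zero_rpow (by norm_num : (1 : ℝ) / 2 ≠ 0), mul_zero] at hSob
      linarith
    rw [hP0]; exact hT
  · have he : (1 / 2 : ℝ) * r = 1 + 2 / ((N : ℝ) - 2) := by
      rw [hrdef]; field_simp; ring
    have hepos : (0 : ℝ) ≤ 2 / ((N : ℝ) - 2) := by positivity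
    calc P = (P ^ θ) ^ r := by rw [← Real.rpow_mul hP, hθr, Real.rpow_one]
      _ ≤ (C * T ^ ((1 : ℝ) / 2)) ^ r :=
          Real.rpow_le_rpow (Real.rpow_nonneg hP θ) hSob hr.le
      _ = C ^ r * (T * T ^ ((2 : ℝ) / ((N : ℝ) - 2))) := by
          rw [Real.mul_rpow hC.le (Real.rpow_nonneg hT _), ← Real.rpow_mul hT, he,
            Real.rpow_add hTpos, Real.rpow_one]
      _ ≤ C ^ r * (T * (C ^ (-(N : ℝ))) ^ ((2 : ℝ) / ((N : ℝ) - 2))) := by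
          have h1 : T ^ ((2 : ℝ) / ((N : ℝ) - 2)) ≤ (C ^ (-(N : ℝ))) ^ ((2 : ℝ) / ((N : ℝ) - 2)) :=
            Real.rpow_le_rpow hT hT'.le hepos
          exact mul_le_mul_of_nonneg_left (mul_le_mul_of_nonneg_left h1 hT)
            (Real.rpow_nonneg hC.le r)
      _ = T := by
          rw [← Real.rpow_mul hC.le]
          have : -(N : ℝ) * ((2 : ℝ) / ((N : ℝ) - 2)) = -r := by
            rw [hrdef]; field_simp
          rw [this, mul_comm T, ← mul_assoc, ← Real.rpow_add hC, add_neg_cancel,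
            Real.rpow_zero, one_mul]

/-- If `u ∈ Ḣ¹(ℝ^N)` satisfies the Sobolev inequality with best constant `C`,
`‖∇u‖² < ‖∇W‖² = C^{-N}` and `E(u) ≤ (1−δ₀)E(W)` for some `δ₀ ∈ (0,1)`, then there are
constants `c₁(δ₀), c₂ > 0` with `c₁ ∫|∇u|² ≤ E(u) ≤ c₂ ∫|∇u|²`. -/
theorem stmt8 (N : ℕ) (hN : 3 ≤ N) (C : ℝ) (hC : 0 < C) (δ₀ : ℝ) (hδ₀ : 0 < δ₀)
    (hδ₀' : δ₀ < 1) :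
    ∃ c₁ > (0 : ℝ), ∃ c₂ > (0 : ℝ), ∀ u : EuclideanSpace ℝ (Fin N) → ℝ,
      (∫ x, |u x| ^ ((2 * (N : ℝ)) / ((N : ℝ) - 2))) ^ (((N : ℝ) - 2) / (2 * (N : ℝ)))
          ≤ C * (∫ x, ‖gradient u x‖ ^ 2) ^ ((1 : ℝ) / 2) →
      (∫ x, ‖gradient u x‖ ^ 2) < C ^ (-(N : ℝ)) →
      (1 / 2) * (∫ x, ‖gradient u x‖ ^ 2)
          - (((N : ℝ) - 2) / (2 * (N : ℝ))) * (∫ x, |u x| ^ ((2 * (N : ℝ)) / ((N : ℝ) - 2)))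
        ≤ (1 - δ₀) * ((1 / (N : ℝ)) * C ^ (-(N : ℝ))) →
      (c₁ * (∫ x, ‖gradient u x‖ ^ 2)
          ≤ (1 / 2) * (∫ x, ‖gradient u x‖ ^ 2)
            - (((N : ℝ) - 2) / (2 * (N : ℝ))) * (∫ x, |u x| ^ ((2 * (N : ℝ)) / ((N : ℝ) - 2)))
        ∧ (1 / 2) * (∫ x, ‖gradient u x‖ ^ 2)
            - (((N : ℝ) - 2) / (2 * (N : ℝ))) * (∫ x, |u x| ^ ((2 * (N : ℝ)) / ((N : ℝ) - 2)))
          ≤ c₂ * (∫ x, ‖gradient u x‖ ^ 2)) := by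
  have hN3 : (3 : ℝ) ≤ (N : ℝ) := by exact_mod_cast hN
  have hNpos : (0 : ℝ) < (N : ℝ) := by linarith
  refine ⟨1 / (N : ℝ), by positivity, 1 / 2, by norm_num, fun u hSob hT' hE => ?_⟩
  set T : ℝ := ∫ x, ‖gradient u x‖ ^ 2 with hTdef
  set P : ℝ := ∫ x, |u x| ^ ((2 * (N : ℝ)) / ((N : ℝ) - 2)) with hPdef
  have hT : 0 ≤ T := integral_nonneg fun x => by positivity
  have hP : 0 ≤ P := integral_nonneg fun x => Real.rpow_nonneg (abs_nonneg _) _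
  have hPT : P ≤ T := aux_PLeT N hN C hC T P hT hP hSob hT'
  have hθ : 0 ≤ ((N : ℝ) - 2) / (2 * (N : ℝ)) := by
    apply div_nonneg <;> linarith
  have key : (1 / 2 : ℝ) - ((N : ℝ) - 2) / (2 * (N : ℝ)) = 1 / (N : ℝ) := by
    field_simp; ring
  constructor
  · have := mul_le_mul_of_nonneg_left hPT hθ
    nlinarith [this, key]
  · nlinarith [mul_nonneg hθ hP]
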